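/- Let $p\in(0,1)$, $q<0$, $\kappa\in(0,1)$, and suppose $\kappa\bigl(1+\sqrt{(1-p)/(1-q)}\bigr)<1$. For $c\ge 0$ and $\tau\ge 0$, let $\mu_1(c)$ and $\lambda_1(c)$ be the unique positive roots of $z^2-cz-1+pe^{-c\tau z}=0$ and $z^2-cz-1+qe^{-c\tau z}=0$ respectively, and set $K(c)=\frac{1-q}{p-q}\bigl(1-\mu_1(c)/\lambda_1(c)\bigr)$. Then $K(0)=\bigl(1+\sqrt{(1-p)/(1-q)}\bigr)^{-1}>\kappa$, $K(c)\to 0$ as $c\to+\infty$, and $K$ is continuous and strictly decreasing on $(0,\infty)$; consequently the equation $K(c)=\kappa$ has a unique positive solution $c$. -/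

import Mathlib

noncomputable def toyF (a τ c z : ℝ) : ℝ := z^2 - c*z - 1 + a * Real.exp (-(c*τ)*z)

lemma toyF_cont (a τ c : ℝ) : Continuous (toyF a τ c) := by
  unfold toyF; fun_prop

/-- sign structure below the unique positive root -/
lemma toyF_neg_below {a τ c m : ℝ} (ha : a < 1) (hτ : 0 ≤ τ) (hc : 0 ≤ c)
    (hm : 0 < m) (hroot : toyF a τ c m = 0)
    (huniq : ∀ z > (0:ℝ), toyF a τ c z = 0 → z = m) :
    ∀ z, 0 ≤ z → z < m → toyF a τ c z < 0 := by
  intro z hz0 hzm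
  rcases eq_or_lt_of_le hz0 with h0 | h0
  · simp [toyF, ← h0]; linarith
  by_contra hpos
  push_neg at hpos
  rcases eq_or_lt_of_le hpos with he | hlt
  · exact absurd (huniq z h0 he.symm) (by linarith)
  · have h00 : toyF a τ c 0 < 0 := by simp [toyF]; linarith
    have := intermediate_value_Ioo (le_of_lt h0) (toyF_cont a τ c).continuousOn
    have hmem : (0:ℝ) ∈ Set.Ioo (toyF a τ c 0) (toyF a τ c z) := ⟨h00, hlt⟩
    obtain ⟨w, hw, hweq⟩ := this hmem
    have := huniq w hw.1 hweq
    linarith [hw.2]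

/-- sign structure above the unique positive root -/
lemma toyF_pos_above {a τ c m : ℝ} (ha : a < 1) (hτ : 0 ≤ τ) (hc : 0 ≤ c)
    (hm : 0 < m) (hroot : toyF a τ c m = 0)
    (huniq : ∀ z > (0:ℝ), toyF a τ c z = 0 → z = m) :
    ∀ z, m < z → 0 < toyF a τ c z := by
  intro z hz
  by_contra hneg
  push_neg at hneg
  rcases eq_or_lt_of_le hneg with he | hlt
  · exact absurd (huniq z (hm.trans hz) he) (by linarith)
  · set z₁ : ℝ := max (z+1) (c + |a| + 2) with hz₁
    have hz₁z : z < z₁ := lt_of_lt_of_le (by linarith) (le_max_left _ _)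
    have hz₁c : c + |a| + 2 ≤ z₁ := le_max_right _ _
    have hz₁pos : 0 < z₁ := by positivity
    have hE : a * Real.exp (-(c*τ)*z₁) ≥ -|a| := by
      have h1 : Real.exp (-(c*τ)*z₁) ≤ 1 := by
        apply Real.exp_le_one_iff.2
        have : 0 ≤ c*τ*z₁ := by positivity
        linarith
      have h2 : 0 < Real.exp (-(c*τ)*z₁) := Real.exp_pos _
      rcases le_or_gt 0 a with h | h
      · nlinarith [abs_nonneg a, le_abs_self a]
      · nlinarith [neg_abs_le a]
    have hpos1 : 0 < toyF a τ c z₁ := by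
      have h2 : 2 ≤ z₁ := by have := abs_nonneg a; linarith
      have : z₁ * (z₁ - c) ≥ 2 * (|a| + 2) := by nlinarith [abs_nonneg a]
      unfold toyF
      nlinarith [abs_nonneg a]
    obtain ⟨w, hw, hweq⟩ := intermediate_value_Ioo (le_of_lt hz₁z)
      (toyF_cont a τ c).continuousOn (show (0:ℝ) ∈ Set.Ioo (toyF a τ c z) (toyF a τ c z₁) from ⟨hlt, hpos1⟩)
    have := huniq w (hm.trans (hz.trans hw.1)) hweq
    linarith [hw.1]

noncomputable def rq (c K : ℝ) : ℝ := (c + Real.sqrt (c^2 + 4*K)) / 2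

lemma rq_pos {c K : ℝ} (hc : 0 ≤ c) (hK : 0 < K) : 0 < rq c K := by
  unfold rq
  have : 0 < Real.sqrt (c^2+4*K) := Real.sqrt_pos.2 (by nlinarith)
  linarith

lemma rq_gt_c {c K : ℝ} (hc : 0 ≤ c) (hK : 0 < K) : c < rq c K := by
  unfold rq
  have h : c < Real.sqrt (c^2+4*K) := by
    have := Real.sqrt_lt_sqrt (by positivity : (0:ℝ) ≤ c^2) (by nlinarith : c^2 < c^2+4*K)
    rwa [Real.sqrt_sq hc] at this
  linarith

lemma rq_eq {c K : ℝ} (hK : 0 ≤ K) : (rq c K)^2 - c * rq c K - K = 0 := by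
  have hs : (Real.sqrt (c^2+4*K))^2 = c^2+4*K := Real.sq_sqrt (by nlinarith)
  unfold rq; nlinarith

lemma rq_mono {c K K' : ℝ} (hK : 0 ≤ K) (h : K < K') : rq c K < rq c K' := by
  unfold rq
  have := Real.sqrt_lt_sqrt (by positivity : (0:ℝ) ≤ c^2+4*K) (by linarith : c^2+4*K < c^2+4*K')
  linarith

lemma rq_le_add {c K : ℝ} (hc : 0 ≤ c) (hK : 0 ≤ K) : rq c K ≤ c + Real.sqrt K := by
  unfold rq
  have h : Real.sqrt (c^2+4*K) ≤ c + 2*Real.sqrt K := by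
    rw [show (4:ℝ)*K = (2*Real.sqrt K)^2 by rw [mul_pow]; rw [Real.sq_sqrt hK]; ring]
    have h2 : 0 ≤ Real.sqrt K := Real.sqrt_nonneg _
    calc Real.sqrt (c^2 + (2*Real.sqrt K)^2) ≤ Real.sqrt ((c + 2*Real.sqrt K)^2) := by
          apply Real.sqrt_le_sqrt; nlinarith
      _ = c + 2*Real.sqrt K := Real.sqrt_sq (by linarith)
  linarith

section bounds
variable {a τ c m : ℝ}

/-- For `0 < a < 1` (case `p`): `rq c (1-a) ≤ m < rq c 1`. -/
lemma mu_bounds (ha0 : 0 < a) (ha : a < 1) (hτ : 0 ≤ τ) (hc : 0 ≤ c)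
    (hm : 0 < m) (hroot : toyF a τ c m = 0)
    (huniq : ∀ z > (0:ℝ), toyF a τ c z = 0 → z = m) :
    rq c (1-a) ≤ m ∧ m < rq c 1 := by
  constructor
  · by_contra h
    push_neg at h
    have hr := rq_pos hc (by linarith : (0:ℝ) < 1-a)
    have hFr : 0 < toyF a τ c (rq c (1-a)) :=
      toyF_pos_above ha hτ hc hm hroot huniq _ h
    have hq := rq_eq (by linarith : (0:ℝ) ≤ 1-a) (c := c)
    have hE : Real.exp (-(c*τ)*(rq c (1-a))) ≤ 1 := by
      apply Real.exp_le_one_iff.2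
      have : 0 ≤ c*τ*(rq c (1-a)) := by positivity
      linarith
    unfold toyF at hFr
    nlinarith
  · by_contra h
    push_neg at h
    have hr := rq_pos hc one_pos (c := c)
    have hq := rq_eq (zero_le_one) (c := c)
    rcases eq_or_lt_of_le h with he | hlt
    · rw [← he] at hroot
      unfold toyF at hroot
      have := Real.exp_pos (-(c*τ)*(rq c 1))
      nlinarith
    · have hFr := toyF_neg_below ha hτ hc hm hroot huniq _ (le_of_lt hr) hlt
      have := Real.exp_pos (-(c*τ)*(rq c 1))
      unfold toyF at hFr
      nlinarith

/-- For `a < 0` (case `q`): `rq c 1 < m ≤ rq c (1-a)`. -/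
lemma lam_bounds (ha : a < 0) (hτ : 0 ≤ τ) (hc : 0 ≤ c)
    (hm : 0 < m) (hroot : toyF a τ c m = 0)
    (huniq : ∀ z > (0:ℝ), toyF a τ c z = 0 → z = m) :
    rq c 1 < m ∧ m ≤ rq c (1-a) := by
  have ha1 : a < 1 := by linarith
  constructor
  · by_contra h
    push_neg at h
    have hr := rq_pos hc one_pos (c := c)
    have hq := rq_eq (zero_le_one) (c := c)
    rcases eq_or_lt_of_le h with he | hlt
    · rw [he] at hroot
      unfold toyF at hroot
      have := Real.exp_pos (-(c*τ)*(rq c 1))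
      nlinarith
    · have hFr := toyF_pos_above ha1 hτ hc hm hroot huniq _ hlt
      have := Real.exp_pos (-(c*τ)*(rq c 1))
      unfold toyF at hFr
      nlinarith
  · by_contra h
    push_neg at h
    have hr := rq_pos hc (by linarith : (0:ℝ) < 1-a)
    have hFr := toyF_neg_below ha1 hτ hc hm hroot huniq _ (le_of_lt hr) h
    have hq := rq_eq (by linarith : (0:ℝ) ≤ 1-a) (c := c)
    have hE : Real.exp (-(c*τ)*(rq c (1-a))) ≤ 1 := by
      apply Real.exp_le_one_iff.2
      have : 0 ≤ c*τ*(rq c (1-a)) := by positivity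
      linarith
    have := Real.exp_pos (-(c*τ)*(rq c (1-a)))
    unfold toyF at hFr
    nlinarith

end bounds

lemma toyF_cont_c (a τ z : ℝ) : Continuous (fun c => toyF a τ c z) := by
  unfold toyF; fun_prop

lemma root_continuousOn {a τ : ℝ} (ha : a < 1) (hτ : 0 ≤ τ) (m : ℝ → ℝ)
    (hm : ∀ c ≥ (0:ℝ), 0 < m c ∧ toyF a τ c (m c) = 0 ∧
      ∀ z > (0:ℝ), toyF a τ c z = 0 → z = m c) :
    ContinuousOn m (Set.Ici 0) := by
  intro c₀ hc₀
  rw [Metric.continuousWithinAt_iff]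
  intro ε hε
  obtain ⟨hm0, hr0, hu0⟩ := hm c₀ hc₀
  set ε' : ℝ := min (ε/2) (m c₀ / 2) with hε'def
  have hε' : 0 < ε' := lt_min (by linarith) (by linarith)
  have hε'le : ε' ≤ ε/2 := min_le_left _ _
  have hε'le2 : ε' ≤ m c₀ / 2 := min_le_right _ _
  have hzm : 0 < m c₀ - ε' := by linarith
  have hhn : toyF a τ c₀ (m c₀ - ε') < 0 :=
    toyF_neg_below ha hτ hc₀ hm0 hr0 hu0 _ (le_of_lt hzm) (by linarith)
  have hhp : 0 < toyF a τ c₀ (m c₀ + ε') :=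
    toyF_pos_above ha hτ hc₀ hm0 hr0 hu0 _ (by linarith)
  have evn : ∀ᶠ c in nhds c₀, toyF a τ c (m c₀ - ε') < 0 :=
    ((toyF_cont_c a τ _).continuousAt).eventually_lt_const hhn
  have evp : ∀ᶠ c in nhds c₀, 0 < toyF a τ c (m c₀ + ε') :=
    ((toyF_cont_c a τ _).continuousAt).eventually_const_lt hhp
  obtain ⟨δ, hδ, hball⟩ := Metric.eventually_nhds_iff.1 (evn.and evp)
  refine ⟨δ, hδ, ?_⟩
  intro c hc hdist
  obtain ⟨h1, h2⟩ := hball hdist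
  obtain ⟨w, hw, hweq⟩ := intermediate_value_Ioo (by linarith : m c₀ - ε' ≤ m c₀ + ε')
    (toyF_cont a τ c).continuousOn (Set.mem_Ioo.2 ⟨h1, h2⟩)
  obtain ⟨_, _, hu⟩ := hm c hc
  have hwm : w = m c := hu w (by linarith [hw.1]) hweq
  rw [Real.dist_eq, abs_lt]
  exact ⟨by linarith [hw.1], by linarith [hw.2]⟩
open Asymptotics Filter

lemma implicit_hasDerivAt {G : ℝ × ℝ → ℝ} {c₀ z₀ Fc Fz : ℝ} (hFz : Fz ≠ 0)
    (hG : HasFDerivAt G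
      (Fc • (ContinuousLinearMap.fst ℝ ℝ ℝ) + Fz • (ContinuousLinearMap.snd ℝ ℝ ℝ)) (c₀, z₀))
    {m : ℝ → ℝ} (hmc : ContinuousAt m c₀) (hmz : m c₀ = z₀)
    (hroot : ∀ᶠ c in nhds c₀, G (c, m c) = 0) :
    HasDerivAt m (-Fc / Fz) c₀ := by
  have hG0 : G (c₀, z₀) = 0 := by
    have := hroot.self_of_nhds; rwa [hmz] at this
  have hφ : Filter.Tendsto (fun c => ((c, m c) : ℝ × ℝ)) (nhds c₀) (nhds (c₀, z₀)) := by
    rw [← hmz]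
    exact continuousAt_id.prodMk hmc
  have h0 := (hG.isLittleO).comp_tendsto hφ
  have h1 : (fun c => Fc * (c - c₀) + Fz * (m c - z₀)) =o[nhds c₀]
      (fun c => ((c - c₀, m c - z₀) : ℝ × ℝ)) := by
    have heq : ∀ᶠ c in nhds c₀,
        -((fun c => G (c, m c) - G (c₀, z₀) -
          (Fc • (ContinuousLinearMap.fst ℝ ℝ ℝ) + Fz • (ContinuousLinearMap.snd ℝ ℝ ℝ))
            ((c, m c) - (c₀, z₀))) c)
        = Fc * (c - c₀) + Fz * (m c - z₀) := by
      filter_upwards [hroot] with c hc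
      simp [hc, hG0, Prod.sub_def]
    have := h0.neg_left
    refine (this.congr' heq ?_).mono le_rfl
    filter_upwards with c
    simp [Prod.sub_def]
  -- Lipschitz bound
  have hFzpos : 0 < |Fz| := abs_pos.2 hFz
  have hev := (isLittleO_iff.1 h1) (by positivity : 0 < |Fz|/2)
  set K : ℝ := (2*|Fc| + |Fz|) / |Fz| with hK
  have hKpos : 0 < K := by positivity
  have hlip : ∀ᶠ c in nhds c₀, |m c - z₀| ≤ K * |c - c₀| := by
    filter_upwards [hev] with c hc
    have hnorm : ‖((c - c₀, m c - z₀) : ℝ × ℝ)‖ ≤ |c - c₀| + |m c - z₀| := by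
      rw [Prod.norm_def]
      simp only [Real.norm_eq_abs]
      exact max_le (le_add_of_nonneg_right (abs_nonneg _)) (le_add_of_nonneg_left (abs_nonneg _))
    have h2 : |Fc * (c - c₀) + Fz * (m c - z₀)| ≤ (|Fz|/2) * (|c - c₀| + |m c - z₀|) := by
      calc |Fc * (c - c₀) + Fz * (m c - z₀)| = ‖Fc * (c - c₀) + Fz * (m c - z₀)‖ := rfl
        _ ≤ (|Fz|/2) * ‖((c - c₀, m c - z₀) : ℝ × ℝ)‖ := hc
        _ ≤ (|Fz|/2) * (|c - c₀| + |m c - z₀|) := by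
            apply mul_le_mul_of_nonneg_left hnorm (by positivity)
    have h3 : |Fz * (m c - z₀)| ≤ |Fc * (c - c₀)| + |Fc * (c - c₀) + Fz * (m c - z₀)| := by
      have h := abs_add_le (Fc * (c - c₀) + Fz * (m c - z₀)) (-(Fc * (c - c₀)))
      have key : Fc * (c - c₀) + Fz * (m c - z₀) + -(Fc * (c - c₀)) = Fz * (m c - z₀) := by ring
      rw [key, abs_neg] at h
      linarith
    rw [abs_mul, abs_mul] at h3
    rw [hK]
    rw [div_mul_eq_mul_div, le_div_iff₀ hFzpos]
    nlinarith [abs_nonneg (m c - z₀), abs_nonneg (c - c₀)]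
  have hbig : (fun c => ((c - c₀, m c - z₀) : ℝ × ℝ)) =O[nhds c₀] (fun c => c - c₀) := by
    apply IsBigO.of_bound (max 1 K)
    filter_upwards [hlip] with c hc
    rw [Prod.norm_def]
    simp only [Real.norm_eq_abs]
    apply max_le
    · calc |c - c₀| = 1 * |c - c₀| := (one_mul _).symm
        _ ≤ max 1 K * |c - c₀| := by
            apply mul_le_mul_of_nonneg_right (le_max_left _ _) (abs_nonneg _)
    · calc |m c - z₀| ≤ K * |c - c₀| := hc
        _ ≤ max 1 K * |c - c₀| := by
            apply mul_le_mul_of_nonneg_right (le_max_right _ _) (abs_nonneg _)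
  have h2 := h1.trans_isBigO hbig
  have h3 := h2.const_mul_left (1/Fz)
  rw [hasDerivAt_iff_isLittleO]
  refine h3.congr ?_ (fun c => rfl)
  intro c
  rw [hmz]
  field_simp
  ring_nf
  simp [hFz]

lemma toyF_hasFDerivAt (a τ c z : ℝ) :
    HasFDerivAt (fun w : ℝ × ℝ => toyF a τ w.1 w.2)
      (((-z - a*τ*z*Real.exp (-(c*τ)*z)) • (ContinuousLinearMap.fst ℝ ℝ ℝ)) +
       ((2*z - c - a*c*τ*Real.exp (-(c*τ)*z)) • (ContinuousLinearMap.snd ℝ ℝ ℝ))) (c, z) := by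
  have hfst : HasFDerivAt (fun w : ℝ × ℝ => w.1) (ContinuousLinearMap.fst ℝ ℝ ℝ) (c, z) :=
    hasFDerivAt_fst
  have hsnd : HasFDerivAt (fun w : ℝ × ℝ => w.2) (ContinuousLinearMap.snd ℝ ℝ ℝ) (c, z) :=
    hasFDerivAt_snd
  have hsq : HasFDerivAt (fun w : ℝ × ℝ => w.2^2)
      ((2*z) • (ContinuousLinearMap.snd ℝ ℝ ℝ)) (c, z) := by
    have := hsnd.mul hsnd
    exact (this.congr_fderiv (by rw [two_mul, add_smul])).congr_of_eventuallyEq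
      (Filter.Eventually.of_forall fun w => by simp [pow_two])
  have hmul : HasFDerivAt (fun w : ℝ × ℝ => w.1 * w.2)
      (c • (ContinuousLinearMap.snd ℝ ℝ ℝ) + z • (ContinuousLinearMap.fst ℝ ℝ ℝ)) (c, z) :=
    hfst.mul hsnd
  have hinner : HasFDerivAt (fun w : ℝ × ℝ => -(w.1*τ)*w.2)
      ((-τ) • (c • (ContinuousLinearMap.snd ℝ ℝ ℝ) + z • (ContinuousLinearMap.fst ℝ ℝ ℝ))) (c, z) := by
    have := hmul.const_mul (-τ)
    exact this.congr_of_eventuallyEq (Filter.Eventually.of_forall fun w => by simp only [neg_mul]; ring)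
  have hexp : HasFDerivAt (fun w : ℝ × ℝ => Real.exp (-(w.1*τ)*w.2))
      (Real.exp (-(c*τ)*z) • ((-τ) • (c • (ContinuousLinearMap.snd ℝ ℝ ℝ) + z • (ContinuousLinearMap.fst ℝ ℝ ℝ)))) (c, z) := by
    have := hinner.exp
    convert this using 2
  have htot := ((hsq.sub hmul).sub_const 1).add (hexp.const_mul a)
  have heq : ((-z - a*τ*z*Real.exp (-(c*τ)*z)) • (ContinuousLinearMap.fst ℝ ℝ ℝ)) +
       ((2*z - c - a*c*τ*Real.exp (-(c*τ)*z)) • (ContinuousLinearMap.snd ℝ ℝ ℝ))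
      = (2 * z) • ContinuousLinearMap.snd ℝ ℝ ℝ -
          (c • ContinuousLinearMap.snd ℝ ℝ ℝ + z • ContinuousLinearMap.fst ℝ ℝ ℝ) +
        a • Real.exp (-(c * τ) * z) • (-τ) •
          (c • ContinuousLinearMap.snd ℝ ℝ ℝ + z • ContinuousLinearMap.fst ℝ ℝ ℝ) := by
    apply ContinuousLinearMap.ext
    intro w
    simp only [ContinuousLinearMap.add_apply, ContinuousLinearMap.sub_apply,
      ContinuousLinearMap.smul_apply, ContinuousLinearMap.coe_fst',
      ContinuousLinearMap.coe_snd', smul_eq_mul]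
    ring
  rw [heq]
  exact htot

lemma toyF_hasDerivAt_z (a τ c z : ℝ) :
    HasDerivAt (toyF a τ c) (2*z - c - a*c*τ*Real.exp (-(c*τ)*z)) z := by
  have h1 : HasDerivAt (fun z:ℝ => z^2) (2*z) z := by simpa using hasDerivAt_pow 2 z
  have h2 : HasDerivAt (fun z:ℝ => c*z) c z := by simpa using (hasDerivAt_id z).const_mul c
  have h3 : HasDerivAt (fun z:ℝ => Real.exp (-(c*τ)*z))
      (Real.exp (-(c*τ)*z) * (-(c*τ))) z := by
    have h0 : HasDerivAt (fun z:ℝ => -(c*τ)*z) (-(c*τ)) z := by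
      simpa using (hasDerivAt_id z).const_mul (-(c*τ))
    exact h0.exp
  have := ((h1.sub h2).sub_const 1).add (h3.const_mul a)
  exact (this.congr_deriv (by ring)).congr_of_eventuallyEq
    (Filter.Eventually.of_forall fun w => by simp [toyF])

/-- positivity of `∂F/∂z` at the root, case `0 < a < 1` (convexity argument). -/
lemma Dp_pos {a τ c m : ℝ} (ha0 : 0 < a) (ha : a < 1) (hτ : 0 ≤ τ) (hc : 0 ≤ c)
    (hm : 0 < m) (hroot : toyF a τ c m = 0) :
    0 < 2*m - c - a*c*τ*Real.exp (-(c*τ)*m) := by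
  by_contra h
  push_neg at h
  have hneg : ∀ z ∈ Set.Ioo (0:ℝ) m, deriv (toyF a τ c) z < 0 := by
    intro z hz
    rw [(toyF_hasDerivAt_z a τ c z).deriv]
    have hE : Real.exp (-(c*τ)*m) ≤ Real.exp (-(c*τ)*z) :=
      Real.exp_le_exp.2 (by nlinarith [hz.1, hz.2, mul_nonneg hc hτ])
    nlinarith [hz.1, hz.2, Real.exp_pos (-(c*τ)*z), mul_nonneg (mul_nonneg hc hτ) (le_of_lt ha0)]
  have hanti : StrictAntiOn (toyF a τ c) (Set.Icc 0 m) := by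
    apply strictAntiOn_of_deriv_neg (convex_Icc 0 m) (toyF_cont a τ c).continuousOn
    rwa [interior_Icc]
  have := hanti (Set.left_mem_Icc.2 (le_of_lt hm)) (Set.right_mem_Icc.2 (le_of_lt hm)) hm
  have h0 : toyF a τ c 0 = a - 1 := by simp [toyF]; ring
  rw [hroot, h0] at this
  linarith

lemma root_hasDerivAt {a τ : ℝ} (ha : a < 1) (hτ : 0 ≤ τ) (m : ℝ → ℝ)
    (hm : ∀ c ≥ (0:ℝ), 0 < m c ∧ toyF a τ c (m c) = 0 ∧
      ∀ z > (0:ℝ), toyF a τ c z = 0 → z = m c)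
    {c₀ : ℝ} (hc₀ : 0 < c₀)
    (hFz : (2*(m c₀) - c₀ - a*c₀*τ*Real.exp (-(c₀*τ)*(m c₀))) ≠ 0) :
    HasDerivAt m ((m c₀ + a*τ*(m c₀)*Real.exp (-(c₀*τ)*(m c₀))) /
      (2*(m c₀) - c₀ - a*c₀*τ*Real.exp (-(c₀*τ)*(m c₀)))) c₀ := by
  have hmc : ContinuousAt m c₀ :=
    (root_continuousOn ha hτ m hm).continuousAt
      (Filter.mem_of_superset (isOpen_Ioi.mem_nhds hc₀) Set.Ioi_subset_Ici_self)
  have hroot : ∀ᶠ c in nhds c₀, (fun w : ℝ × ℝ => toyF a τ w.1 w.2) (c, m c) = 0 := by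
    filter_upwards [isOpen_Ioi.mem_nhds hc₀] with c hc
    exact (hm c (le_of_lt hc)).2.1
  have hD := implicit_hasDerivAt hFz (toyF_hasFDerivAt a τ c₀ (m c₀)) hmc rfl hroot
  convert hD using 1
  rw [neg_div, show -(m c₀) - a*τ*(m c₀)*Real.exp (-(c₀*τ)*(m c₀))
    = -((m c₀) + a*τ*(m c₀)*Real.exp (-(c₀*τ)*(m c₀))) by ring]
  rw [neg_div, neg_neg]

set_option maxHeartbeats 1000000 in
theorem toy_unique_speed (p q κ τ : ℝ) (hp : p ∈ Set.Ioo (0 : ℝ) 1) (hq : q < 0)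
    (hκ : κ ∈ Set.Ioo (0 : ℝ) 1) (hτ : 0 ≤ τ)
    (hsmall : κ * (1 + Real.sqrt ((1 - p) / (1 - q))) < 1)
    (μ₁ lam₁ : ℝ → ℝ)
    (hμ : ∀ c ≥ (0 : ℝ), 0 < μ₁ c ∧
      (μ₁ c) ^ 2 - c * μ₁ c - 1 + p * Real.exp (-(c * τ) * μ₁ c) = 0 ∧
      ∀ z > (0 : ℝ), z ^ 2 - c * z - 1 + p * Real.exp (-(c * τ) * z) = 0 → z = μ₁ c)
    (hlam : ∀ c ≥ (0 : ℝ), 0 < lam₁ c ∧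
      (lam₁ c) ^ 2 - c * lam₁ c - 1 + q * Real.exp (-(c * τ) * lam₁ c) = 0 ∧
      ∀ z > (0 : ℝ), z ^ 2 - c * z - 1 + q * Real.exp (-(c * τ) * z) = 0 → z = lam₁ c) :
    ((1 - q) / (p - q) * (1 - μ₁ 0 / lam₁ 0)
        = (1 + Real.sqrt ((1 - p) / (1 - q)))⁻¹) ∧
    κ < (1 - q) / (p - q) * (1 - μ₁ 0 / lam₁ 0) ∧
    Filter.Tendsto (fun c : ℝ => (1 - q) / (p - q) * (1 - μ₁ c / lam₁ c))
      Filter.atTop (nhds 0) ∧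
    ContinuousOn (fun c : ℝ => (1 - q) / (p - q) * (1 - μ₁ c / lam₁ c))
      (Set.Ioi 0) ∧
    StrictAntiOn (fun c : ℝ => (1 - q) / (p - q) * (1 - μ₁ c / lam₁ c))
      (Set.Ioi 0) ∧
    ∃! c : ℝ, 0 < c ∧ (1 - q) / (p - q) * (1 - μ₁ c / lam₁ c) = κ := by
  obtain ⟨hp0, hp1⟩ := hp
  obtain ⟨hκ0, hκ1⟩ := hκ
  have hq1 : q < 1 := by linarith
  have hμ' : ∀ c ≥ (0:ℝ), 0 < μ₁ c ∧ toyF p τ c (μ₁ c) = 0 ∧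
      ∀ z > (0:ℝ), toyF p τ c z = 0 → z = μ₁ c := hμ
  have hlam' : ∀ c ≥ (0:ℝ), 0 < lam₁ c ∧ toyF q τ c (lam₁ c) = 0 ∧
      ∀ z > (0:ℝ), toyF q τ c z = 0 → z = lam₁ c := hlam
  have hC : 0 < (1-q)/(p-q) := div_pos (by linarith) (by linarith)
  -- values at 0
  set A := Real.sqrt (1-p) with hAdef
  set B := Real.sqrt (1-q) with hBdef
  have hA0 : 0 < A := Real.sqrt_pos.2 (by linarith)
  have hB0 : 0 < B := Real.sqrt_pos.2 (by linarith)
  have hA2 : A^2 = 1-p := Real.sq_sqrt (by linarith)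
  have hB2 : B^2 = 1-q := Real.sq_sqrt (by linarith)
  have hAB : A < B := by
    rw [hAdef, hBdef]
    exact Real.sqrt_lt_sqrt (by linarith) (by linarith)
  have hsAB : Real.sqrt ((1-p)/(1-q)) = A/B := by
    rw [hAdef, hBdef, Real.sqrt_div (by linarith : (0:ℝ) ≤ 1-p)]
  have hμ0 : μ₁ 0 = A := by
    obtain ⟨h1, h2, h3⟩ := hμ 0 le_rfl
    refine (h3 A hA0 ?_).symm
    rw [hA2]
    norm_num
  have hlam0 : lam₁ 0 = B := by
    obtain ⟨h1, h2, h3⟩ := hlam 0 le_rfl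
    refine (h3 B hB0 ?_).symm
    rw [hB2]
    norm_num
  have hK0 : (1 - q) / (p - q) * (1 - μ₁ 0 / lam₁ 0)
      = (1 + Real.sqrt ((1 - p) / (1 - q)))⁻¹ := by
    rw [hμ0, hlam0, hsAB, show (1:ℝ)-q = B^2 from hB2.symm,
      show p - q = B^2 - A^2 by rw [hA2, hB2]; ring]
    have h1 : B ≠ 0 := ne_of_gt hB0
    have h2 : B^2 - A^2 ≠ 0 := by nlinarith
    have h3 : B + A ≠ 0 := by positivity
    field_simp
    ring
  have hκK0 : κ < (1 - q) / (p - q) * (1 - μ₁ 0 / lam₁ 0) := by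
    rw [hK0]
    have h1s : 0 < 1 + Real.sqrt ((1-p)/(1-q)) := by
      positivity
    rw [inv_eq_one_div, lt_div_iff₀ h1s]
    linarith
  -- basic comparison
  have hlt : ∀ c ≥ (0:ℝ), μ₁ c < lam₁ c := by
    intro c hc
    obtain ⟨h1, h2, h3⟩ := hμ' c hc
    obtain ⟨g1, g2, g3⟩ := hlam' c hc
    linarith [(mu_bounds hp0 hp1 hτ hc h1 h2 h3).2, (lam_bounds hq hτ hc g1 g2 g3).1]
  -- continuity
  have hμcont : ContinuousOn μ₁ (Set.Ici 0) := root_continuousOn hp1 hτ μ₁ hμ'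
  have hlcont : ContinuousOn lam₁ (Set.Ici 0) := root_continuousOn hq1 hτ lam₁ hlam'
  have hKcontIci : ContinuousOn
      (fun c : ℝ => (1 - q) / (p - q) * (1 - μ₁ c / lam₁ c)) (Set.Ici 0) := by
    apply ContinuousOn.mul continuousOn_const
    apply ContinuousOn.sub continuousOn_const
    exact hμcont.div hlcont (fun c hc => ne_of_gt (hlam' c hc).1)
  have hKcont := hKcontIci.mono Set.Ioi_subset_Ici_self
  -- tendsto
  have hratio : Filter.Tendsto (fun c => μ₁ c / lam₁ c) Filter.atTop (nhds 1) := by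
    have h1 : Filter.Tendsto (fun c : ℝ => B/(c+B)) Filter.atTop (nhds 0) :=
      Filter.Tendsto.div_atTop tendsto_const_nhds (Filter.tendsto_atTop_add_const_right _ B Filter.tendsto_id)
    have hlow : Filter.Tendsto (fun c : ℝ => c/(c+B)) Filter.atTop (nhds 1) := by
      have h2 : Filter.Tendsto (fun c : ℝ => 1 - B/(c+B)) Filter.atTop (nhds (1-0)) :=
        tendsto_const_nhds.sub h1
      rw [sub_zero] at h2
      apply h2.congr'
      filter_upwards [Filter.eventually_gt_atTop 0] with c hc
      have hcB : c + B ≠ 0 := by positivity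
      field_simp
      ring
    apply tendsto_of_tendsto_of_tendsto_of_le_of_le' hlow tendsto_const_nhds
    · filter_upwards [Filter.eventually_ge_atTop 0] with c hc
      obtain ⟨h1, h2, h3⟩ := hμ' c hc
      obtain ⟨g1, g2, g3⟩ := hlam' c hc
      have hbμ := (mu_bounds hp0 hp1 hτ hc h1 h2 h3).1
      have hbl := (lam_bounds hq hτ hc g1 g2 g3).2
      have hμc : c ≤ μ₁ c :=
        le_trans (le_of_lt (rq_gt_c hc (by linarith))) hbμ
      have hlB : lam₁ c ≤ c + B := by
        refine le_trans hbl ?_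
        have := rq_le_add (K := 1-q) hc (by linarith)
        rwa [← hBdef] at this
      rw [div_le_div_iff₀ (by positivity) g1]
      nlinarith
    · filter_upwards [Filter.eventually_ge_atTop 0] with c hc
      obtain ⟨g1, _, _⟩ := hlam' c hc
      rw [div_le_one g1]
      exact le_of_lt (hlt c hc)
  have hKtends : Filter.Tendsto (fun c : ℝ => (1 - q) / (p - q) * (1 - μ₁ c / lam₁ c))
      Filter.atTop (nhds 0) := by
    have h2 : Filter.Tendsto (fun c : ℝ => (1:ℝ) - μ₁ c / lam₁ c)
        Filter.atTop (nhds (1-1)) := tendsto_const_nhds.sub hratio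
    have h3 := h2.const_mul ((1-q)/(p-q))
    simpa using h3
  -- strict antitonicity
  have hanti : StrictAntiOn (fun c : ℝ => (1 - q) / (p - q) * (1 - μ₁ c / lam₁ c))
      (Set.Ioi 0) := by
    apply strictAntiOn_of_deriv_neg (convex_Ioi 0) hKcont
    intro c hc
    rw [interior_Ioi] at hc
    have hcpos : (0:ℝ) < c := hc
    obtain ⟨h1, h2, h3⟩ := hμ' c hcpos.le
    obtain ⟨g1, g2, g3⟩ := hlam' c hcpos.le
    set Em : ℝ := Real.exp (-(c*τ)*(μ₁ c)) with hEm
    set El : ℝ := Real.exp (-(c*τ)*(lam₁ c)) with hEl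
    have hEmpos : 0 < Em := Real.exp_pos _
    have hElpos : 0 < El := Real.exp_pos _
    have hDμ : 0 < 2*(μ₁ c) - c - p*c*τ*Em := Dp_pos hp0 hp1 hτ hcpos.le h1 h2
    have hDl : 0 < 2*(lam₁ c) - c - q*c*τ*El := by
      have hb2 := (lam_bounds hq hτ hcpos.le g1 g2 g3).1
      have hcrq := rq_gt_c hcpos.le one_pos
      nlinarith [mul_nonneg (mul_nonneg hcpos.le hτ) hElpos.le]
    have hμd := root_hasDerivAt hp1 hτ μ₁ hμ' hcpos (ne_of_gt hDμ)
    have hld := root_hasDerivAt hq1 hτ lam₁ hlam' hcpos (ne_of_gt hDl)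
    rw [← hEm] at hμd
    rw [← hEl] at hld
    set μ' : ℝ := (μ₁ c + p*τ*(μ₁ c)*Em) / (2*(μ₁ c) - c - p*c*τ*Em) with hμ'def
    set lamd : ℝ := (lam₁ c + q*τ*(lam₁ c)*El) / (2*(lam₁ c) - c - q*c*τ*El) with hlamd_def
    have hdiv : HasDerivAt (fun c => μ₁ c / lam₁ c)
        ((μ' * lam₁ c - μ₁ c * lamd) / (lam₁ c)^2) c := hμd.div hld (ne_of_gt g1)
    have hKd : HasDerivAt (fun c : ℝ => (1 - q) / (p - q) * (1 - μ₁ c / lam₁ c))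
        ((1-q)/(p-q) * (0 - (μ' * lam₁ c - μ₁ c * lamd) / (lam₁ c)^2)) c :=
      ((hasDerivAt_const c (1:ℝ)).sub hdiv).const_mul _
    rw [hKd.deriv]
    have hnum : (μ₁ c + p*τ*(μ₁ c)*Em) * (lam₁ c) * (2*(lam₁ c) - c - q*c*τ*El)
        - (μ₁ c) * (lam₁ c + q*τ*(lam₁ c)*El) * (2*(μ₁ c) - c - p*c*τ*Em)
        = (μ₁ c)*(lam₁ c)*(2*((lam₁ c) - (μ₁ c)) + 2*τ*(p*Em*(lam₁ c) - q*El*(μ₁ c))) := by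
      ring
    have hnumpos : 0 < (μ₁ c)*(lam₁ c)*(2*((lam₁ c) - (μ₁ c)) + 2*τ*(p*Em*(lam₁ c) - q*El*(μ₁ c))) := by
      have h5 := hlt c hcpos.le
      have h6 : 0 ≤ τ*(p*Em*(lam₁ c) - q*El*(μ₁ c)) := by
        apply mul_nonneg hτ
        nlinarith [mul_pos (mul_pos hp0 hEmpos) g1, mul_pos (mul_pos (neg_pos.2 hq) hElpos) h1]
      apply mul_pos (mul_pos h1 g1)
      linarith
    have hX : 0 < μ' * lam₁ c - μ₁ c * lamd := by
      have heq : μ' * lam₁ c - μ₁ c * lamd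
          = ((μ₁ c + p*τ*(μ₁ c)*Em) * (lam₁ c) * (2*(lam₁ c) - c - q*c*τ*El)
            - (μ₁ c) * (lam₁ c + q*τ*(lam₁ c)*El) * (2*(μ₁ c) - c - p*c*τ*Em))
            / ((2*(μ₁ c) - c - p*c*τ*Em) * (2*(lam₁ c) - c - q*c*τ*El)) := by
        rw [hμ'def, hlamd_def]
        rw [div_mul_eq_mul_div, mul_div_assoc', div_sub_div _ _ hDμ.ne' hDl.ne']
        ring
      rw [heq, hnum]
      exact div_pos hnumpos (mul_pos hDμ hDl)
    have hlsq : 0 < (lam₁ c)^2 := pow_pos g1 2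
    have : 0 < (μ' * lam₁ c - μ₁ c * lamd) / (lam₁ c)^2 := div_pos hX hlsq
    nlinarith
  -- existence and uniqueness
  have hexu : ∃! c : ℝ, 0 < c ∧ (1 - q) / (p - q) * (1 - μ₁ c / lam₁ c) = κ := by
    have hev : ∀ᶠ c in Filter.atTop,
        (1 - q) / (p - q) * (1 - μ₁ c / lam₁ c) < κ :=
      hKtends.eventually (eventually_lt_nhds hκ0)
    obtain ⟨M, hM⟩ := (hev.and (Filter.eventually_ge_atTop 1)).exists
    have hM1 : (1:ℝ) ≤ M := hM.2
    have hicc : ContinuousOn (fun c : ℝ => (1 - q) / (p - q) * (1 - μ₁ c / lam₁ c))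
        (Set.Icc 0 M) := hKcontIci.mono (fun x hx => hx.1)
    have hIvt := intermediate_value_Ioo' (by linarith : (0:ℝ) ≤ M) hicc
    have hκmem : κ ∈ Set.Ioo ((fun c : ℝ => (1 - q) / (p - q) * (1 - μ₁ c / lam₁ c)) M)
        ((fun c : ℝ => (1 - q) / (p - q) * (1 - μ₁ c / lam₁ c)) 0) := ⟨hM.1, hκK0⟩
    obtain ⟨c, hcmem, hceq⟩ := hIvt hκmem
    refine ⟨c, ⟨hcmem.1, hceq⟩, ?_⟩
    rintro c' ⟨hc', hceq'⟩
    exact hanti.injOn hc' hcmem.1 (hceq'.trans hceq.symm)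
  exact ⟨hK0, hκK0, hKtends, hKcont, hanti, hexu⟩
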